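/- Existence and uniqueness of the optimal parameter: there exists a unique λ* ∈ (0,1) satisfying ln(1/λ*) = 1/λ* − 2, and for this λ* one has (1 + ln(1/λ*))/(1 − λ*) = 1/λ*. -/

import Mathlib

open Set

noncomputable def gAux (l : ℝ) : ℝ := Real.log l + l⁻¹

lemma gAux_hasDerivAt {x : ℝ} (hx : x ≠ 0) :
    HasDerivAt gAux (1/x - 1/x^2) x := by
  have h1 := Real.hasDerivAt_log hx
  have h2 := hasDerivAt_inv hx
  have := h1.add h2
  show HasDerivAt (Real.log + fun y => y⁻¹) _ x
  simpa [gAux, one_div, sub_eq_add_neg, pow_two, mul_inv] using this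

lemma gAux_anti : StrictAntiOn gAux (Ioo (0:ℝ) 1) := by
  apply strictAntiOn_of_deriv_neg (convex_Ioo 0 1)
  · intro x hx
    exact ((Real.continuousAt_log (ne_of_gt hx.1)).add
      (continuousAt_inv₀ (ne_of_gt hx.1))).continuousWithinAt
  · intro x hx
    rw [interior_Ioo] at hx
    rw [(gAux_hasDerivAt (ne_of_gt hx.1)).deriv]
    have hx0 : (0:ℝ) < x := hx.1
    have hx2 : (0:ℝ) < x^2 := by positivity
    rw [sub_neg, div_lt_div_iff₀ hx0 hx2]
    nlinarith [hx.2]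

lemma exp_two_gt : (4:ℝ) < Real.exp 2 := by
  have h := Real.exp_one_gt_d9
  have : Real.exp 2 = Real.exp 1 * Real.exp 1 := by
    rw [← Real.exp_add]; norm_num
  nlinarith

lemma eq_iff {l : ℝ} (hl : 0 < l) :
    Real.log (1 / l) = 1 / l - 2 ↔ gAux l = 2 := by
  rw [one_div, Real.log_inv, gAux]
  constructor <;> intro h <;> linarith

theorem stmt15 :
    (∃! l : ℝ, l ∈ Ioo (0:ℝ) 1 ∧ Real.log (1 / l) = 1 / l - 2) ∧
      ∀ l : ℝ, l ∈ Ioo (0:ℝ) 1 → Real.log (1 / l) = 1 / l - 2 →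
        (1 + Real.log (1 / l)) / (1 - l) = 1 / l := by
  constructor
  · -- existence and uniqueness
    have ha : (0:ℝ) < Real.exp (-2) := Real.exp_pos _
    have hab : Real.exp (-2) ≤ (1/2 : ℝ) := by
      have h4 := exp_two_gt
      have he : Real.exp (-2) = (Real.exp 2)⁻¹ := by
        rw [← Real.exp_neg]
      rw [he, show (1/2:ℝ) = (2:ℝ)⁻¹ by norm_num]
      exact inv_anti₀ (by norm_num) (by linarith)
    have hcont : ContinuousOn gAux (Icc (Real.exp (-2)) (1/2)) := by
      intro x hx
      have hx0 : (0:ℝ) < x := lt_of_lt_of_le ha hx.1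
      exact ((Real.continuousAt_log (ne_of_gt hx0)).add
        (continuousAt_inv₀ (ne_of_gt hx0))).continuousWithinAt
    have hga : gAux (Real.exp (-2)) = -2 + Real.exp 2 := by
      rw [gAux, Real.log_exp, ← Real.exp_neg]
      norm_num
    have hgb : gAux (1/2 : ℝ) = -Real.log 2 + 2 := by
      rw [gAux, one_div, Real.log_inv]
      norm_num
    have hmem : (2:ℝ) ∈ Icc (gAux (1/2:ℝ)) (gAux (Real.exp (-2))) := by
      constructor
      · rw [hgb]
        have := Real.log_nonneg (by norm_num : (1:ℝ) ≤ 2)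
        linarith
      · rw [hga]
        have := exp_two_gt
        linarith
    obtain ⟨c, hc, hgc⟩ := intermediate_value_Icc' hab hcont hmem
    have hcIoo : c ∈ Ioo (0:ℝ) 1 := ⟨lt_of_lt_of_le ha hc.1,
      lt_of_le_of_lt hc.2 (by norm_num)⟩
    refine ⟨c, ⟨hcIoo, (eq_iff hcIoo.1).mpr hgc⟩, ?_⟩
    intro y ⟨hy, hyeq⟩
    have hgy : gAux y = 2 := (eq_iff hy.1).mp hyeq
    exact gAux_anti.injOn hy hcIoo (hgy.trans hgc.symm)
  · intro l hl heq
    have hl0 : l ≠ 0 := ne_of_gt hl.1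
    have hl1 : (1:ℝ) - l ≠ 0 := by have := hl.2; intro h; linarith [sub_eq_zero.mp h]
    rw [heq]
    field_simp
    ring
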